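/- Let p be a prime and let G be a finite p-group satisfying rk(G) = r and whose exponent is p^d. Then |G| ≤ p^(2·d·r^2). -/

import Mathlib

/-- In a finite p-group, a nontrivial normal subgroup meets the center nontrivially. -/
lemma aux_normal_meets_center {p : ℕ} (hp : p.Prime) {G : Type*} [Group G] [Finite G]
    (hG : IsPGroup p G) (N : Subgroup G) [N.Normal] (hN : N ≠ ⊥) :
    ∃ x : G, x ∈ N ∧ x ∈ Subgroup.center G ∧ x ≠ 1 := by
  haveI := Fact.mk hp
  have hNp : IsPGroup p N := hG.to_subgroup N
  obtain ⟨k, hk⟩ := hNp.exists_card_eq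
  have hk0 : k ≠ 0 := by
    rintro rfl
    exact hN ((Subgroup.card_eq_one).mp (by simpa using hk))
  have hdvd : p ∣ Nat.card N := hk ▸ dvd_pow_self p hk0
  have h1 : (1 : N) ∈ MulAction.fixedPoints (ConjAct G) N := fun g => smul_one g
  obtain ⟨b, hb, hb1⟩ :=
    (hG.of_equiv ConjAct.toConjAct).exists_fixed_point_of_prime_dvd_card_of_fixed_point
      (α := N) hdvd h1
  refine ⟨(b : G), b.2, ?_, ?_⟩
  · rw [Subgroup.mem_center_iff]
    intro g
    have h2 := congrArg Subtype.val (hb (ConjAct.toConjAct g))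
    rw [ConjAct.Subgroup.val_conj_smul, ConjAct.smul_def] at h2
    simp only [ConjAct.ofConjAct_toConjAct] at h2
    calc g * b = (g * b * g⁻¹) * g := by group
      _ = b * g := by rw [h2]
  · intro h
    exact hb1 (Subtype.ext h.symm)


/-- A maximal normal abelian subgroup of a finite p-group is self-centralizing. -/
lemma aux_self_centralizing {p : ℕ} (hp : p.Prime) {G : Type*} [Group G] [Finite G]
    (hG : IsPGroup p G) :
    ∃ A : Subgroup G, A.Normal ∧ IsMulCommutative A ∧ Subgroup.centralizer (A : Set G) = A := by
  classical
  haveI := Fact.mk hp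
  set s : Set (Subgroup G) := {A | A.Normal ∧ IsMulCommutative A} with hs
  have hbot : (⊥ : Subgroup G) ∈ s := by
    refine ⟨inferInstance, ⟨⟨?_⟩⟩⟩
    rintro ⟨a, ha⟩ ⟨b, hb⟩
    rw [Subgroup.mem_bot] at ha hb
    subst ha; subst hb
    rfl
  obtain ⟨A, hAs, hAmax⟩ := Set.Finite.exists_maximalFor
    (fun A : Subgroup G => Nat.card A) s (Set.toFinite s) ⟨⊥, hbot⟩
  obtain ⟨hAnormal, hAcomm⟩ := hAs
  haveI := hAnormal; haveI := hAcomm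
  refine ⟨A, hAnormal, hAcomm, le_antisymm ?_ (Subgroup.le_centralizer A)⟩
  by_contra hnle
  rw [SetLike.not_le_iff_exists] at hnle
  obtain ⟨x, hxC, hxA⟩ := hnle
  -- centralizer of A is normal
  have hCn : (Subgroup.centralizer (A : Set G)).Normal := by
    constructor
    intro c hc g
    rw [Subgroup.mem_centralizer_iff] at hc ⊢
    intro h hh
    have h' : g⁻¹ * h * g ∈ A := by
      simpa using hAnormal.conj_mem h hh g⁻¹
    have := hc _ h'
    have goal : h * (g * c * g⁻¹) = g * c * g⁻¹ * h := by
      have e : h = g * (g⁻¹ * h * g) * g⁻¹ := by group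
      rw [e]
      calc g * (g⁻¹ * h * g) * g⁻¹ * (g * c * g⁻¹)
          = g * ((g⁻¹ * h * g) * c) * g⁻¹ := by group
        _ = g * (c * (g⁻¹ * h * g)) * g⁻¹ := by rw [this]
        _ = g * c * g⁻¹ * (g * (g⁻¹ * h * g) * g⁻¹) := by group
    exact goal
  haveI := hCn
  -- image of centralizer in G/A is a nontrivial normal subgroup
  set π := QuotientGroup.mk' A with hπ
  set N : Subgroup (G ⧸ A) := (Subgroup.centralizer (A : Set G)).map π with hN
  haveI : N.Normal := Subgroup.Normal.map hCn π (QuotientGroup.mk'_surjective A)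
  have hNne : N ≠ ⊥ := by
    intro hb
    have : π x ∈ N := Subgroup.mem_map_of_mem π hxC
    rw [hb, Subgroup.mem_bot] at this
    exact hxA ((QuotientGroup.eq_one_iff x).mp this)
  obtain ⟨y, hyN, hyZ, hy1⟩ := aux_normal_meets_center hp (hG.to_quotient A) N hNne
  obtain ⟨x₀, hx₀C, rfl⟩ := hyN
  have hx₀A : x₀ ∉ A := fun h => hy1 ((QuotientGroup.eq_one_iff x₀).mpr h)
  -- the subgroup B
  have hzn : (Subgroup.zpowers (π x₀)).Normal := by
    constructor
    intro n hn g
    have hnc : n ∈ Subgroup.center (G ⧸ A) := Subgroup.zpowers_le.mpr hyZ hn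
    rw [Subgroup.mem_center_iff] at hnc
    have : g * n * g⁻¹ = n := by rw [hnc g]; group
    rwa [this]
  set B : Subgroup G := (Subgroup.zpowers (π x₀)).comap π with hB
  haveI : B.Normal := hzn.comap π
  have hAB : A ≤ B := by
    intro a ha
    have h1 : π a = 1 := (QuotientGroup.eq_one_iff a).mpr ha
    exact Subgroup.mem_comap.mpr (by rw [h1]; exact Subgroup.one_mem _)
  have hx₀B : x₀ ∈ B := Subgroup.mem_comap.mpr (Subgroup.mem_zpowers _)
  -- decomposition of elements of B
  have hdec : ∀ b ∈ B, ∃ k : ℤ, ∃ c ∈ A, b = x₀ ^ k * c := by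
    intro b hb
    rw [hB, Subgroup.mem_comap, Subgroup.mem_zpowers_iff] at hb
    obtain ⟨k, hk⟩ := hb
    refine ⟨k, (x₀ ^ k)⁻¹ * b, ?_, by group⟩
    rw [← QuotientGroup.eq_one_iff (G := G) (N := A)]
    have : π (x₀ ^ k) = π b := by rw [map_zpow]; exact hk
    show π ((x₀ ^ k)⁻¹ * b) = 1
    rw [map_mul, map_inv, this, inv_mul_cancel]
  -- B is commutative
  have hcx : ∀ a ∈ A, Commute x₀ a := fun a ha =>
    (Subgroup.mem_centralizer_iff.mp (SetLike.mem_coe.mp hx₀C) a ha).symm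
  have hBcomm : IsMulCommutative B := by
    constructor
    constructor
    rintro ⟨b, hb⟩ ⟨b', hb'⟩
    obtain ⟨k, c, hc, rfl⟩ := hdec b hb
    obtain ⟨k', c', hc', rfl⟩ := hdec b' hb'
    have h1 : Commute (x₀ ^ k) (x₀ ^ k') := (Commute.refl x₀).zpow_zpow k k'
    have h2 : Commute (x₀ ^ k) c' := (hcx c' hc').zpow_left k
    have h3 : Commute c (x₀ ^ k') := ((hcx c hc).symm).zpow_right k'
    have h4 : Commute c c' := Subgroup.mul_comm_of_mem_isMulCommutative A hc hc'
    have : Commute (x₀ ^ k * c) (x₀ ^ k' * c') := (h1.mul_right h2).mul_left (h3.mul_right h4)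
    exact Subtype.ext this
  -- contradiction with maximality
  have hBs : B ∈ s := ⟨inferInstance, hBcomm⟩
  have hle : Nat.card A ≤ Nat.card B :=
    Nat.le_of_dvd Nat.card_pos (Subgroup.card_dvd_of_le hAB)
  have := hAmax hBs hle
  have hABeq : A = B := Subgroup.eq_of_le_of_card_ge hAB this
  exact hx₀A (hABeq ▸ hx₀B)

/-- **Theorem (order bound from rank and exponent).**
If `G` is a finite `p`-group with `rk(G) = r` (the maximum, over abelian subgroups `A` of `G`,
of the minimal number of generators of `A`) and exponent `p ^ d`, then `|G| ≤ p ^ (2 d r²)`. -/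

theorem stmt_1 (p : ℕ) (hp : p.Prime) (G : Type*) [Group G] [Finite G]
    (hG : IsPGroup p G) (r d : ℕ)
    (hrank : IsGreatest {n | ∃ A : Subgroup G, IsMulCommutative A ∧ Group.rank A = n} r)
    (hexp : Monoid.exponent G = p ^ d) :
    Nat.card G ≤ p ^ (2 * d * r ^ 2) := by
  classical
  haveI := Fact.mk hp
  rcases Nat.eq_zero_or_pos r with hr0 | hr1
  · -- r = 0 : G is trivial
    subst hr0
    have hg1 : ∀ g : G, g = 1 := by
      intro g
      have hc : IsMulCommutative (Subgroup.zpowers g) := inferInstance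
      have hle : Group.rank (Subgroup.zpowers g) ≤ 0 :=
        hrank.2 ⟨Subgroup.zpowers g, hc, rfl⟩
      obtain ⟨S, hS1, hS2⟩ := Group.rank_spec (Subgroup.zpowers g)
      have hSe : S = ∅ := Finset.card_eq_zero.mp (le_antisymm (hS1 ▸ hle) (Nat.zero_le _))
      rw [hSe] at hS2
      simp only [Finset.coe_empty, Subgroup.closure_empty] at hS2
      have : (⟨g, Subgroup.mem_zpowers g⟩ : Subgroup.zpowers g) ∈ (⊤ : Subgroup (Subgroup.zpowers g)) :=
        Subgroup.mem_top _
      rw [← hS2, Subgroup.mem_bot] at this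
      exact congrArg Subtype.val this
    have : Nat.card G = 1 := by
      haveI : Subsingleton G := ⟨fun a b => by rw [hg1 a, hg1 b]⟩
      exact Nat.card_eq_one_iff_unique.mpr ⟨inferInstance, ⟨1⟩⟩
    simp [this]
  · obtain ⟨A, hAnormal, hAcomm, hAC⟩ := aux_self_centralizing hp hG
    haveI := hAnormal; haveI := hAcomm
    have hrA : Group.rank A ≤ r := hrank.2 ⟨A, hAcomm, rfl⟩
    -- card A ≤ p ^ (d * r)
    have hA_exp : ∀ a : A, a ^ (p ^ d) = 1 := by
      intro a
      have h1 : (a : G) ^ (p ^ d) = 1 := by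
        rw [← hexp]; exact Monoid.pow_exponent_eq_one (a : G)
      exact Subtype.ext (by push_cast; exact h1)
    have hAdvd : Nat.card A ∣ (p ^ d) ^ Group.rank A := open scoped IsMulCommutative in card_dvd_exponent_pow_rank' A hA_exp
    have hAcard : Nat.card A ≤ p ^ (d * r) := by
      refine Nat.le_of_dvd (pow_pos hp.pos _) (hAdvd.trans ?_)
      rw [← pow_mul]
      exact pow_dvd_pow p (Nat.mul_le_mul_left d hrA)
    -- Aut bound
    obtain ⟨S, hS1, hS2⟩ := Group.rank_spec A
    have hautcard : Nat.card (MulAut A) ≤ Nat.card A ^ r := by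
      have hinj : Function.Injective (fun (e : MulAut A) (s : S) => e (s : A)) := by
        intro e1 e2 h
        have heq : (e1 : A →* A) = (e2 : A →* A) := by
          refine MonoidHom.eq_of_eqOn_dense hS2 ?_
          intro x hx
          exact congrFun h ⟨x, hx⟩
        exact MulEquiv.toMonoidHom_injective heq
      calc Nat.card (MulAut A) ≤ Nat.card (S → A) := Nat.card_le_card_of_injective _ hinj
        _ = Nat.card A ^ S.card := by
            rw [Nat.card_fun]
            congr 1
            simp [Nat.card_eq_fintype_card]
        _ ≤ Nat.card A ^ r := Nat.pow_le_pow_right Nat.card_pos (hS1 ▸ hrA)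
    -- kernel of conjugation action
    set f : G →* MulAut A := MulAut.conjNormal with hf
    have hker : f.ker = A := by
      ext g
      rw [MonoidHom.mem_ker]
      have hmem : g ∈ Subgroup.centralizer (A : Set G) ↔ g ∈ A := by rw [hAC]
      rw [← hmem, Subgroup.mem_centralizer_iff]
      constructor
      · intro h a ha
        have h1 := DFunLike.congr_fun h (⟨a, ha⟩ : A)
        have h2 : g * a * g⁻¹ = a := by
          have := congrArg Subtype.val h1
          simpa [hf, MulAut.conjNormal_apply] using this
        calc a * g = (g * a * g⁻¹) * g := by rw [h2]
          _ = g * a := by group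
      · intro h
        ext b
        have hb := h (b : G) b.2
        simp only [MulAut.conjNormal_apply, MulAut.one_apply]
        calc g * (b : G) * g⁻¹ = ((b : G) * g) * g⁻¹ := by rw [← hb]
          _ = b := by group
    -- finiteness of MulAut A
    haveI : Finite (MulAut A) :=
      Finite.of_injective (fun e : MulAut A => (e : A → A)) DFunLike.coe_injective
    have hquot : Nat.card (G ⧸ f.ker) ≤ Nat.card (MulAut A) :=
      Nat.card_le_card_of_injective _ (QuotientGroup.kerLift_injective f)
    have key : Nat.card G = Nat.card (G ⧸ f.ker) * Nat.card f.ker :=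
      Subgroup.card_eq_card_quotient_mul_card_subgroup f.ker
    have hkercard : Nat.card f.ker = Nat.card A := by rw [hker]
    calc Nat.card G = Nat.card (G ⧸ f.ker) * Nat.card f.ker := key
      _ ≤ Nat.card (MulAut A) * Nat.card A := by
          rw [hkercard]; exact Nat.mul_le_mul_right _ hquot
      _ ≤ Nat.card A ^ r * Nat.card A := Nat.mul_le_mul_right _ hautcard
      _ ≤ (p ^ (d * r)) ^ r * p ^ (d * r) :=
          Nat.mul_le_mul (Nat.pow_le_pow_left hAcard r) hAcard
      _ = p ^ (d * r * r + d * r) := by rw [← pow_mul, ← pow_add]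
      _ ≤ p ^ (2 * d * r ^ 2) := Nat.pow_le_pow_right hp.pos (by rw [pow_two]; nlinarith [Nat.mul_le_mul (le_refl (d * r)) hr1])
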